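/- For the Erdős–Taylor sequence with a_n = n+1 (i.e. b₁ = 1, b_{n+1} = (n+1) b_n + 1), the group G₁(b) = {t ∈ ℝ/ℤ : ∑_n ‖b_n t‖ < ∞} equals {0}. -/

import Mathlib

/-- `G₁(b)` inside the circle `ℝ/ℤ`; the norm on `AddCircle (1:ℝ)` is the
distance to the nearest integer. -/
noncomputable def G1 (b : ℕ → ℕ) : Set (AddCircle (1:ℝ)) :=
  {t | Summable (fun n => ‖b n • t‖)}

/-- For the Erdős–Taylor sequence with `aₙ = n + 1`, i.e. `b₁ = 1`,
`bₙ₊₁ = (n+1) bₙ + 1`, the group `G₁(b)` is trivial. -/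
theorem stmt10 (b : ℕ → ℕ) (hb1 : b 1 = 1)
    (hrec : ∀ n, 1 ≤ n → b (n + 1) = (n + 1) * b n + 1) (hb0 : b 0 = 1) :
    G1 b = {0} := by
  have h1 : (0:ℝ) < 1 := one_pos
  ext t
  simp only [G1, Set.mem_setOf_eq, Set.mem_singleton_iff]
  constructor
  · intro hs
    by_contra ht
    have hδ : 0 < ‖t‖ := norm_pos_iff.mpr ht
    set δ : ℝ := ‖t‖ with hδdef
    set c : ℕ → ℝ := fun n => ‖b n • t‖ with hc
    -- c tends to 0
    have hten : Filter.Tendsto c Filter.atTop (nhds 0) := hs.tendsto_atTop_zero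
    obtain ⟨N, hN⟩ := (Metric.tendsto_atTop.mp hten (δ/2) (by positivity))
    -- key inequality
    have key : ∀ n, 1 ≤ n → δ ≤ c (n+1) + (n+1) * c n := by
      intro n hn
      have hrw : b (n+1) • t = (n+1) • (b n • t) + t := by
        rw [hrec n hn, add_smul, one_smul, mul_smul]
      have : t = b (n+1) • t - (n+1) • (b n • t) := by rw [hrw]; abel
      calc δ = ‖b (n+1) • t - (n+1) • (b n • t)‖ := by rw [← this]
        _ ≤ ‖b (n+1) • t‖ + ‖(n+1) • (b n • t)‖ := norm_sub_le _ _
        _ ≤ c (n+1) + (n+1) * c n := by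
            refine add_le_add le_rfl ?_
            have : ‖(n+1) • (b n • t)‖ ≤ ((n+1 : ℕ) : ℝ) * ‖b n • t‖ := norm_nsmul_le
            simpa using this
    -- lower bound for large n
    set M := max N 1 with hM
    have hlow : ∀ n : ℕ, δ / 2 * (1 / ((n:ℝ) + M + 1)) ≤ c (n + M) := by
      intro n
      have hn1 : 1 ≤ n + M := le_trans (le_max_right N 1) (Nat.le_add_left M n)
      have hkey := key (n + M) hn1
      have hc1 : c (n + M + 1) ≤ δ / 2 := by
        have := hN (n + M + 1) (by omega)
        rw [Real.dist_eq] at this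
        have hnn : 0 ≤ c (n + M + 1) := norm_nonneg _
        calc c (n+M+1) = |c (n+M+1) - 0| := by rw [sub_zero, abs_of_nonneg hnn]
          _ ≤ δ / 2 := le_of_lt this
      have hmul : δ / 2 ≤ ((n + M : ℕ) + 1 : ℝ) * c (n + M) := by linarith
      have hpos : (0:ℝ) < ((n + M : ℕ) + 1 : ℝ) := by positivity
      have := (div_le_iff₀ hpos).mpr (by linarith [hmul] : δ / 2 ≤ c (n+M) * ((n + M : ℕ) + 1 : ℝ))
      calc δ / 2 * (1 / ((n:ℝ) + M + 1)) = δ / 2 / ((n + M : ℕ) + 1 : ℝ) := by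
            push_cast; ring
        _ ≤ c (n + M) := this
    -- summability contradiction
    have hs' : Summable (fun n => c (n + M)) := (summable_nat_add_iff M).mpr hs
    have hsum2 : Summable (fun n : ℕ => δ / 2 * (1 / ((n:ℝ) + M + 1))) :=
      Summable.of_nonneg_of_le (fun n => by positivity) hlow hs'
    have hsum3 : Summable (fun n : ℕ => (1 / ((n:ℝ) + M + 1))) := by
      have h2δ : (δ/2) ≠ 0 := ne_of_gt (by positivity)
      have := hsum2.mul_left (δ/2)⁻¹
      simp only [← mul_assoc, inv_mul_cancel₀ h2δ, one_mul] at this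
      exact this
    have hsum4 : Summable (fun n : ℕ => (1 / ((n + (M+1) : ℕ) : ℝ))) := by
      convert hsum3 using 2 with n
      push_cast; ring
    have hsum5 : Summable (fun n : ℕ => (1 / (n : ℝ))) :=
      (summable_nat_add_iff (M+1)).mp hsum4
    exact Real.not_summable_one_div_natCast hsum5
  · intro h
    subst h
    simpa using summable_zero
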